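/- arXiv:2604.22616 — 2 statements merged into one kernel-verified Lean document; each statement's English description precedes it below -/
import Mathlib

section
/- Suppose Q_{2n} = P_{2n} + ξ_{n-1} P_{2n-2} where the P's satisfy x^2 P_{2n} = P_{2n+2} + (β_{2n}+β_{2n+1}) P_{2n} + β_{2n-1}β_{2n} P_{2n-2}. Define g_n(x) = x^2 − β_{2n} − β_{2n+1} + ξ_n and f_n(x) = β_{2n}β_{2n-1} + ξ_{n-1} g_n(x). Then for n ≥ 2 the even skew-orthogonal polynomials satisfy the closed three-point relation f_{n-1} Q_{2n+2} = (f_{n-1} g_n − ξ_{n-2} f_n) Q_{2n} − β_{2n-3} β_{2n-2} f_n Q_{2n-2}. -/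
open Polynomial

set_option maxHeartbeats 1600000

theorem stmt16 (P : ℤ → Polynomial ℝ) (β ξ : ℤ → ℝ)
    (hPneg : ∀ j : ℤ, j < 0 → P j = 0)
    (hdouble : ∀ n : ℤ, 0 ≤ n →
      X ^ 2 * P (2 * n) =
        P (2 * n + 2) + C (β (2 * n) + β (2 * n + 1)) * P (2 * n)
          + C (β (2 * n - 1) * β (2 * n)) * P (2 * n - 2))
    (Qe : ℤ → Polynomial ℝ)
    (hQe : ∀ n : ℤ, Qe n = P (2 * n) + C (ξ (n - 1)) * P (2 * n - 2))
    (g f : ℤ → Polynomial ℝ)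
    (hg : ∀ n : ℤ, g n = X ^ 2 - C (β (2 * n) + β (2 * n + 1) - ξ n))
    (hf : ∀ n : ℤ, f n = C (β (2 * n) * β (2 * n - 1)) + C (ξ (n - 1)) * g n) :
    ∀ n : ℤ, 2 ≤ n →
      f (n - 1) * Qe (n + 1) =
        (f (n - 1) * g n - C (ξ (n - 2)) * f n) * Qe n
          - C (β (2 * n - 3) * β (2 * n - 2)) * (f n * Qe (n - 1)) := by
  intro n hn
  have h1 : P (2 * n + 2) = X ^ 2 * P (2 * n)
      - C (β (2 * n) + β (2 * n + 1)) * P (2 * n)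
      - C (β (2 * n - 1) * β (2 * n)) * P (2 * n - 2) := by
    linear_combination - hdouble n (by linarith)
  have h2 : P (2 * n) = X ^ 2 * P (2 * n - 2)
      - C (β (2 * n - 2) + β (2 * n - 1)) * P (2 * n - 2)
      - C (β (2 * n - 3) * β (2 * n - 2)) * P (2 * n - 4) := by
    have h := hdouble (n - 1) (by linarith)
    simp only [show 2 * (n - 1) = 2 * n - 2 by ring, show 2 * n - 2 + 2 = 2 * n by ring,
      show 2 * n - 2 + 1 = 2 * n - 1 by ring, show 2 * n - 2 - 1 = 2 * n - 3 by ring,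
      show 2 * n - 2 - 2 = 2 * n - 4 by ring] at h
    linear_combination - h
  simp only [hQe, hg, hf, show (n : ℤ) + 1 - 1 = n by ring,
    show 2 * (n + 1) = 2 * n + 2 by ring, show 2 * (n + 1) - 2 = 2 * n by ring,
    show 2 * (n - 1) = 2 * n - 2 by ring, show 2 * (n - 1) - 2 = 2 * n - 4 by ring,
    show (n : ℤ) - 1 - 1 = n - 2 by ring, show 2 * (n - 1) + 1 = 2 * n - 1 by ring, show 2 * n + 2 - 2 = 2 * n by ring,
    show 2 * n - 2 - 2 = 2 * n - 4 by ring, show 2 * n - 2 + 1 = 2 * n - 1 by ring]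
  rw [h1, h2]
  simp only [map_add, map_mul, map_sub]
  ring
end

section
/- With S_{2n+1} = O_{2n+1} − n O_{2n-1} for monic Hermite polynomials O_n, the odd skew-Hermite polynomials satisfy the closed relation 2(x^2 − 4n + 1) S_{2n+3} = (2x^4 − 3(1+4n)x^2 + 8n(2n+1) − 5) S_{2n+1} − n(2n−1)(x^2 − 4n − 3) S_{2n-1}. -/
open Polynomial

theorem stmt19 (O : ℤ → Polynomial ℝ)
    (hOneg : ∀ j : ℤ, j < 0 → O j = 0)
    (hrec : ∀ n : ℤ, 0 ≤ n → X * O n = O (n + 1) + C ((n : ℝ) / 2) * O (n - 1))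
    (S : ℤ → Polynomial ℝ)
    (hSneg : ∀ j : ℤ, j < 0 → S j = 0)
    (hS : ∀ n : ℤ, 0 ≤ n → S n = O (2 * n + 1) - C ((n : ℝ)) * O (2 * n - 1)) :
    ∀ n : ℤ, 0 ≤ n →
      C 2 * (X ^ 2 - C (4 * (n : ℝ) - 1)) * S (n + 1) =
        (C 2 * X ^ 4 - C (3 * (1 + 4 * (n : ℝ))) * X ^ 2
            + C (8 * (n : ℝ) * (2 * (n : ℝ) + 1) - 5)) * S n
          - C ((n : ℝ) * (2 * (n : ℝ) - 1)) * (X ^ 2 - C (4 * (n : ℝ) + 3)) * S (n - 1) := by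
  have hH : (2 : Polynomial ℝ) * C ((1:ℝ)/2) = 1 := by
    rw [← map_ofNat (C : ℝ →+* Polynomial ℝ) 2, ← C_mul]
    norm_num
  intro n hn
  rcases eq_or_lt_of_le hn with h0 | h1
  · -- n = 0
    subst h0
    -- sorry for now
    have hm1 : S (0 - 1 : ℤ) = 0 := hSneg _ (by norm_num)
    have ha := hrec 0 le_rfl
    have hb := hrec 1 (by norm_num)
    have hc := hrec 2 (by norm_num)
    have hS0 := hS 0 le_rfl
    have hS1 := hS 1 (by norm_num)
    norm_num at ha hb hc hS0 hS1 ⊢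
    simp only [map_ofNat]
    linear_combination (2*X^2+2)*hS1 + (-2*X^4+3*X^2+5)*hS0 + (-2*X^2-2)*hc
      + (-2*X^3-2*X)*hb + (-X^2-1)*ha + (-(X^3+X)*O 0)*hH
  · -- n ≥ 1
    have h1' := hrec (2*n-2) (by omega)
    have h2' := hrec (2*n-1) (by omega)
    have h3' := hrec (2*n) (by omega)
    have h4' := hrec (2*n+1) (by omega)
    have h5' := hrec (2*n+2) (by omega)
    rw [show (2*n-2)+1 = 2*n-1 by ring, show (2*n-2)-1 = 2*n-3 by ring,
        show ((2*n-2:ℤ):ℝ)/2 = (n:ℝ)-1 by push_cast; ring] at h1'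
    rw [show (2*n-1)+1 = 2*n by ring, show (2*n-1)-1 = 2*n-2 by ring,
        show ((2*n-1:ℤ):ℝ)/2 = (n:ℝ)-1/2 by push_cast; ring] at h2'
    rw [show (2*n)-1 = 2*n-1 by ring,
        show ((2*n:ℤ):ℝ)/2 = (n:ℝ) by push_cast; ring] at h3'
    rw [show (2*n+1)+1 = 2*n+2 by ring, show (2*n+1)-1 = 2*n by ring,
        show ((2*n+1:ℤ):ℝ)/2 = (n:ℝ)+1/2 by push_cast; ring] at h4'
    rw [show (2*n+2)+1 = 2*n+3 by ring, show (2*n+2)-1 = 2*n+1 by ring,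
        show ((2*n+2:ℤ):ℝ)/2 = (n:ℝ)+1 by push_cast; ring] at h5'
    have hSp := hS (n+1) (by omega)
    have hSn' := hS n hn
    have hSm := hS (n-1) (by omega)
    rw [show 2*(n+1)+1 = 2*n+3 by ring, show 2*(n+1)-1 = 2*n+1 by ring,
        show ((n+1:ℤ):ℝ) = (n:ℝ)+1 by push_cast; ring] at hSp
    rw [show 2*(n-1)+1 = 2*n-1 by ring, show 2*(n-1)-1 = 2*n-3 by ring,
        show ((n-1:ℤ):ℝ) = (n:ℝ)-1 by push_cast; ring] at hSm
    simp only [map_sub, map_add, map_mul, map_one, map_ofNat] at h1' h2' h3' h4' h5' hSp hSm ⊢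
    linear_combination
      (2*X^2 - 8*C (n:ℝ) + 2) * hSp
      + (-2*X^4 + 12*X^2*C (n:ℝ) + 3*X^2 - 16*(C (n:ℝ))^2 - 8*C (n:ℝ) + 5) * hSn'
      + (2*X^2*(C (n:ℝ))^2 - X^2*C (n:ℝ) - 8*(C (n:ℝ))^3 - 2*(C (n:ℝ))^2 + 3*C (n:ℝ)) * hSm
      + (2*X^2*(C (n:ℝ))^2 - X^2*C (n:ℝ) - 8*(C (n:ℝ))^3 - 2*(C (n:ℝ))^2 + 3*C (n:ℝ)) * h1'
      + 2*(X^3*C (n:ℝ) - 4*X*(C (n:ℝ))^2 - 3*X*C (n:ℝ)) * h2'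
      + (-X^2 - 4*C (n:ℝ) - 1) * h3'
      + 2*(-X^3 + 4*X*C (n:ℝ) - X) * h4'
      + (-2*X^2 + 8*C (n:ℝ) - 2) * h5'
      + (-(X^3*C (n:ℝ) - 4*X*(C (n:ℝ))^2 - 3*X*C (n:ℝ)) * O (2*n-2)
         + (-X^3 + 4*X*C (n:ℝ) - X) * O (2*n)) * hH
end
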